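/- Let u be a subharmonic function on ℝ², and let M_u(r) denote the maximum of u over the closed Euclidean disk of radius r centered at the origin. Then for any 0 < r₁ < r₂ < r₃, one has M_u(r₂) ≤ [M_u(r₁)(log r₃ − log r₂) + M_u(r₃)(log r₂ − log r₁)] / (log r₃ − log r₁). -/

import Mathlib

open Set Filter Real
open scoped RealInnerProductSpace



/-- The Euclidean Laplacian `Δu(x) = ∑ᵢ ∂²u/∂xᵢ²(x)` on `ℝ²`. -/
noncomputable def euclideanLaplacian (u : EuclideanSpace ℝ (Fin 2) → ℝ)
    (x : EuclideanSpace ℝ (Fin 2)) : ℝ :=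
  ∑ i : Fin 2,
    iteratedFDeriv ℝ 2 u x ![EuclideanSpace.single i (1 : ℝ), EuclideanSpace.single i (1 : ℝ)]

/-- `M_u(r)`, the maximum of `u` over the closed Euclidean disk of radius `r`
centered at the origin. -/
noncomputable def maxDisk (u : EuclideanSpace ℝ (Fin 2) → ℝ) (r : ℝ) : ℝ :=
  sSup (u '' Metric.closedBall (0 : EuclideanSpace ℝ (Fin 2)) r)

lemma second_deriv_nonpos_of_isLocalMax {g g' g'' : ℝ → ℝ} {δ : ℝ} (hδ : 0 < δ)
    (hd : ∀ t ∈ Set.Ioo (-δ) δ, HasDerivAt g (g' t) t)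
    (hd2 : ∀ t ∈ Set.Ioo (-δ) δ, HasDerivAt g' (g'' t) t)
    (hc : ContinuousAt g'' 0)
    (hmax : IsLocalMax g 0) : g'' 0 ≤ 0 := by
  by_contra hpos
  push_neg at hpos
  have h1 : ∀ᶠ t in nhds (0:ℝ), 0 < g'' t := hc.eventually (eventually_gt_nhds hpos)
  have h2 : ∀ᶠ t in nhds (0:ℝ), g t ≤ g 0 := hmax
  obtain ⟨δ', hδ', hball⟩ := Metric.eventually_nhds_iff_ball.mp (h1.and h2)
  set t0 : ℝ := min δ δ' / 2 with ht0
  have hminpos : 0 < min δ δ' := lt_min hδ hδ'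
  have ht0pos : 0 < t0 := by positivity
  have ht0lt : t0 < min δ δ' := by simp only [ht0]; linarith
  have hsub : Set.Icc (0:ℝ) t0 ⊆ Set.Ioo (-δ) δ := fun x hx => ⟨by nlinarith [hx.1], by
    have := hx.2; have : x ≤ t0 := hx.2; nlinarith [min_le_left δ δ']⟩
  have hg'0 : g' 0 = 0 := hmax.hasDerivAt_eq_zero (hd 0 ⟨by linarith, hδ⟩)
  -- MVT for g on [0, t0]
  obtain ⟨c, hc_mem, hc_eq⟩ := exists_hasDerivAt_eq_slope g g' ht0pos
    (fun x hx => (hd x (hsub hx)).continuousAt.continuousWithinAt)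
    (fun x hx => hd x (hsub (Set.mem_Icc_of_Ioo hx)))
  -- MVT for g' on [0, c]
  have hcsub : Set.Icc (0:ℝ) c ⊆ Set.Ioo (-δ) δ := fun x hx =>
    hsub ⟨hx.1, hx.2.trans hc_mem.2.le⟩
  obtain ⟨d, hd_mem, hd_eq⟩ := exists_hasDerivAt_eq_slope g' g'' hc_mem.1
    (fun x hx => (hd2 x (hcsub hx)).continuousAt.continuousWithinAt)
    (fun x hx => hd2 x (hcsub (Set.mem_Icc_of_Ioo hx)))
  have hd_in : d ∈ Metric.ball (0:ℝ) δ' := by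
    simp only [Metric.mem_ball, Real.dist_eq, sub_zero]
    rw [abs_of_pos hd_mem.1]
    have : d < c := hd_mem.2
    have : c < t0 := hc_mem.2
    have := min_le_right δ δ'
    linarith
  have hg''d : 0 < g'' d := (hball d hd_in).1
  have hg'c : 0 < g' c := by
    have h3 : g'' d = (g' c - g' 0) / (c - 0) := hd_eq
    rw [hg'0, sub_zero, sub_zero] at h3
    have hcpos := hc_mem.1
    have h4 := (div_eq_iff hcpos.ne').mp h3.symm
    nlinarith
  have hgt0 : g 0 < g t0 := by
    have h3 : g' c = (g t0 - g 0) / (t0 - 0) := hc_eq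
    rw [sub_zero] at h3
    have h4 := (div_eq_iff ht0pos.ne').mp h3.symm
    nlinarith
  have ht0_in : t0 ∈ Metric.ball (0:ℝ) δ' := by
    simp only [Metric.mem_ball, Real.dist_eq, sub_zero, abs_of_pos ht0pos]
    have := min_le_right δ δ'; linarith
  exact absurd (hball t0 ht0_in).2 (not_le.mpr hgt0)

lemma no_interior_max {u : EuclideanSpace ℝ (Fin 2) → ℝ} (hu : ContDiff ℝ 2 u)
    (hsub : ∀ x, 0 ≤ euclideanLaplacian u x) {α β ε : ℝ} (hε : 0 < ε)
    {p : EuclideanSpace ℝ (Fin 2)} (hp : p ≠ 0)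
    (hmax : IsLocalMax (fun y => u y - (α + β * Real.log ‖y‖) + ε * ‖y‖ ^ 2) p) :
    False := by
  have hf1 : ContDiff ℝ 1 (fderiv ℝ u) := hu.fderiv_right (by norm_num)
  set e : Fin 2 → EuclideanSpace ℝ (Fin 2) := fun i => EuclideanSpace.single i (1:ℝ) with he
  set A : ℝ := ‖p‖ ^ 2 with hA
  have hpnorm : 0 < ‖p‖ := norm_pos_iff.mpr hp
  have hApos : 0 < A := by positivity
  set δ : ℝ := ‖p‖ with hδdef
  have hδ : 0 < δ := hpnorm
  have key : ∀ i : Fin 2,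
      (fderiv ℝ (fderiv ℝ u) p) (e i) (e i)
        - β / 2 * ((2 * A - (2 * p i + 2 * 0) * (2 * p i + 2 * 0)) / A ^ 2) + ε * 2 ≤ 0 := by
    intro i
    set L : ℝ → EuclideanSpace ℝ (Fin 2) := fun t => p + t • e i with hL
    set q : ℝ → ℝ := fun t => A + 2 * p i * t + t ^ 2 with hq
    have hL0 : L 0 = p := by simp [hL]
    have hq0 : q 0 = A := by simp [hq]
    have hnormsingle : ‖e i‖ = 1 := by simp [he]
    have hqL : ∀ t : ℝ, ‖L t‖ ^ 2 = q t := by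
      intro t
      have h1 : @inner ℝ _ _ p (t • e i) = t * p i := by
        rw [real_inner_smul_right]
        have h0 : @inner ℝ _ _ p (e i) = p i := by
          have := EuclideanSpace.inner_single_right (𝕜 := ℝ) i 1 p
          rw [he]; simpa using this
        rw [h0]
      have h2 : ‖t • e i‖ ^ 2 = t ^ 2 := by
        rw [norm_smul, hnormsingle, mul_one, Real.norm_eq_abs, sq_abs]
      rw [hL]
      simp only
      rw [norm_add_sq_real, h1, h2, hq]
      ring
    have hqpos : ∀ t ∈ Set.Ioo (-δ) δ, 0 < q t := by
      intro t ht
      have hne : L t ≠ 0 := by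
        intro h0
        have hpt : p = -(t • e i) := by
          have h0' : p + t • e i = 0 := h0
          linear_combination (norm := module) h0'
        have hnp : δ = |t| := by
          rw [hδdef, hpt, norm_neg, norm_smul, hnormsingle, mul_one, Real.norm_eq_abs]
        have habs : |t| < δ := abs_lt.mpr ⟨ht.1, ht.2⟩
        rw [← hnp] at habs
        exact lt_irrefl _ habs
      rw [← hqL t]
      have := norm_pos_iff.mpr hne
      positivity
    have hLd : ∀ t : ℝ, HasDerivAt L (e i) t := by
      intro t
      exact (((hasDerivAt_id t).smul_const (e i)).const_add p).congr_deriv (one_smul ℝ _)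
    have hLc : Continuous L := by
      rw [hL]; exact continuous_const.add (continuous_id.smul continuous_const)
    have hqd : ∀ t : ℝ, HasDerivAt q (2 * p i + 2 * t) t := by
      intro t
      have h := (((hasDerivAt_id t).const_mul (2 * p i)).const_add A).add (hasDerivAt_pow 2 t)
      exact h.congr_deriv (by simp)
    have hq'd : ∀ t : ℝ, HasDerivAt (fun s => 2 * p i + 2 * s) 2 t := by
      intro t
      simpa using ((hasDerivAt_id t).const_mul 2).const_add (2 * p i)
    set G : ℝ → ℝ := fun t => u (L t) - (α + β / 2 * Real.log (q t)) + ε * q t with hG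
    set G' : ℝ → ℝ := fun t =>
      (fderiv ℝ u (L t)) (e i) - β / 2 * ((2 * p i + 2 * t) / q t) + ε * (2 * p i + 2 * t)
      with hG'
    set G'' : ℝ → ℝ := fun t =>
      (fderiv ℝ (fderiv ℝ u) (L t)) (e i) (e i)
        - β / 2 * ((2 * q t - (2 * p i + 2 * t) * (2 * p i + 2 * t)) / q t ^ 2) + ε * 2
      with hG''
    have hdG : ∀ t ∈ Set.Ioo (-δ) δ, HasDerivAt G (G' t) t := by
      intro t ht
      have t1 : HasDerivAt (fun s => u (L s)) ((fderiv ℝ u (L t)) (e i)) t :=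
        ((hu.differentiable (by norm_num)) (L t)).hasFDerivAt.comp_hasDerivAt t (hLd t)
      have t2 : HasDerivAt (fun s => Real.log (q s)) ((2 * p i + 2 * t) / q t) t := by
        have h : HasDerivAt (fun s => Real.log (q s)) ((q t)⁻¹ * (2 * p i + 2 * t)) t :=
          (Real.hasDerivAt_log (hqpos t ht).ne').comp t (hqd t)
        exact (by ring : (q t)⁻¹ * (2 * p i + 2 * t) = (2 * p i + 2 * t) / q t) ▸ h
      exact (t1.sub ((t2.const_mul (β / 2)).const_add α)).add ((hqd t).const_mul ε)
    have hdG' : ∀ t ∈ Set.Ioo (-δ) δ, HasDerivAt G' (G'' t) t := by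
      intro t ht
      have s1 : HasDerivAt (fun s => (fderiv ℝ u (L s)) (e i))
          ((fderiv ℝ (fderiv ℝ u) (L t)) (e i) (e i)) t := by
        have hD : HasDerivAt (fun s => fderiv ℝ u (L s))
            ((fderiv ℝ (fderiv ℝ u) (L t)) (e i)) t :=
          ((hf1.differentiable one_ne_zero) (L t)).hasFDerivAt.comp_hasDerivAt t (hLd t)
        simpa using hD.clm_apply (hasDerivAt_const t (e i))
      have s2 : HasDerivAt (fun s => (2 * p i + 2 * s) / q s)
          ((2 * q t - (2 * p i + 2 * t) * (2 * p i + 2 * t)) / q t ^ 2) t :=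
        (hq'd t).div (hqd t) (hqpos t ht).ne'
      exact (s1.sub (s2.const_mul (β / 2))).add ((hq'd t).const_mul ε)
    have hcont : ContinuousAt G'' 0 := by
      have c1 : Continuous (fun t => (fderiv ℝ (fderiv ℝ u) (L t)) (e i) (e i)) := by
        have hC : Continuous (fderiv ℝ (fderiv ℝ u)) := hf1.continuous_fderiv one_ne_zero
        exact ((hC.comp hLc).clm_apply continuous_const).clm_apply continuous_const
      have cq : Continuous q := by
        rw [hq]
        exact (continuous_const.add (continuous_const.mul continuous_id)).add (continuous_pow 2)
      have c2 : ContinuousAt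
          (fun t => (2 * q t - (2 * p i + 2 * t) * (2 * p i + 2 * t)) / q t ^ 2) 0 := by
        apply ContinuousAt.div
        · exact ((continuousAt_const.mul cq.continuousAt).sub
            (((continuousAt_const.add (continuousAt_const.mul continuousAt_id))).mul
              ((continuousAt_const.add (continuousAt_const.mul continuousAt_id)))))
        · exact cq.continuousAt.pow 2
        · rw [hq0]; positivity
      exact (c1.continuousAt.sub (continuousAt_const.mul c2)).add continuousAt_const
    have hlocmax : IsLocalMax G 0 := by
      set φ : EuclideanSpace ℝ (Fin 2) → ℝ :=
        fun y => u y - (α + β * Real.log ‖y‖) + ε * ‖y‖ ^ 2 with hφ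
      have h1 : IsLocalMax (fun t => φ (L t)) 0 := by
        have htend : Filter.Tendsto L (nhds 0) (nhds p) := by
          rw [← hL0]; exact hLc.continuousAt
        have := htend.eventually hmax
        simpa [IsLocalMax, IsMaxFilter, hL0] using this
      have h2 : (fun t => φ (L t)) =ᶠ[nhds (0:ℝ)] G := by
        filter_upwards [Ioo_mem_nhds (by linarith : -δ < 0) hδ] with t ht
        have hnorm : ‖L t‖ = Real.sqrt (q t) := by
          rw [← hqL t, Real.sqrt_sq (norm_nonneg _)]
        rw [hφ, hG]
        simp only
        rw [hnorm, Real.log_sqrt (hqpos t ht).le, Real.sq_sqrt (hqpos t ht).le]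
        ring
      exact h1.congr h2
    have := second_deriv_nonpos_of_isLocalMax hδ hdG hdG' hcont hlocmax
    rw [hG''] at this
    simp only at this
    rw [hL0, hq0] at this
    convert this using 3 <;> ring
  -- sum the three inequalities
  have hA2 : A = p 0 ^ 2 + p 1 ^ 2 := by
    rw [hA, hδdef, EuclideanSpace.norm_eq, Real.sq_sqrt (by positivity)]
    simp [Fin.sum_univ_two, sq_abs]
  have hlap : euclideanLaplacian u p =
      (fderiv ℝ (fderiv ℝ u) p) (e 0) (e 0) + (fderiv ℝ (fderiv ℝ u) p) (e 1) (e 1) := by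
    rw [euclideanLaplacian, Fin.sum_univ_two]
    rw [iteratedFDeriv_two_apply, iteratedFDeriv_two_apply]
    simp [he]
  have e0 := key 0
  have e1 := key 1
  have hzero : (2 * A - (2 * p 0 + 2 * 0) * (2 * p 0 + 2 * 0)) / A ^ 2
      + (2 * A - (2 * p 1 + 2 * 0) * (2 * p 1 + 2 * 0)) / A ^ 2 = 0 := by
    rw [← add_div]
    rw [show (2 * A - (2 * p 0 + 2 * 0) * (2 * p 0 + 2 * 0))
      + (2 * A - (2 * p 1 + 2 * 0) * (2 * p 1 + 2 * 0)) = 4 * A - 4 * (p 0 ^ 2 + p 1 ^ 2) by ring]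
    rw [← hA2]
    simp
  have hDnn := hsub p
  rw [hlap] at hDnn
  have hsum : (fderiv ℝ (fderiv ℝ u) p) (e 0) (e 0) + (fderiv ℝ (fderiv ℝ u) p) (e 1) (e 1)
      + ε * 4 - β / 2 * ((2 * A - (2 * p 0 + 2 * 0) * (2 * p 0 + 2 * 0)) / A ^ 2
      + (2 * A - (2 * p 1 + 2 * 0) * (2 * p 1 + 2 * 0)) / A ^ 2) ≤ 0 := by linarith
  rw [hzero] at hsum
  linarith

lemma max_principle {u : EuclideanSpace ℝ (Fin 2) → ℝ} (hu : ContDiff ℝ 2 u)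
    (hsub : ∀ x, 0 ≤ euclideanLaplacian u x)
    {r₁ r₃ α β : ℝ} (h₀ : 0 < r₁) (h₂ : r₁ < r₃)
    (hbound : ∀ y : EuclideanSpace ℝ (Fin 2), ‖y‖ = r₁ ∨ ‖y‖ = r₃ →
      u y ≤ α + β * Real.log ‖y‖)
    {x : EuclideanSpace ℝ (Fin 2)} (hx1 : r₁ ≤ ‖x‖) (hx3 : ‖x‖ ≤ r₃) :
    u x ≤ α + β * Real.log ‖x‖ := by
  have hr3 : 0 < r₃ := lt_trans h₀ h₂
  have hkey : ∀ ε : ℝ, 0 < ε → u x - (α + β * Real.log ‖x‖) ≤ ε * r₃ ^ 2 := by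
    intro ε hε
    set K : Set (EuclideanSpace ℝ (Fin 2)) :=
      Metric.closedBall 0 r₃ \ Metric.ball 0 r₁ with hK
    have hKc : IsCompact K := (isCompact_closedBall 0 r₃).diff Metric.isOpen_ball
    have hxK : x ∈ K := by
      constructor
      · exact mem_closedBall_zero_iff.mpr hx3
      · simp only [Metric.mem_ball, dist_zero_right, not_lt]
        exact hx1
    have hmem : ∀ y ∈ K, r₁ ≤ ‖y‖ ∧ ‖y‖ ≤ r₃ := by
      intro y hy
      constructor
      · have := hy.2; rw [Metric.mem_ball, dist_zero_right] at this; exact not_lt.mp this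
      · exact mem_closedBall_zero_iff.mp hy.1
    set φ : EuclideanSpace ℝ (Fin 2) → ℝ :=
      fun y => u y - (α + β * Real.log ‖y‖) + ε * ‖y‖ ^ 2 with hφ
    have hcont : ContinuousOn φ K := by
      intro y hy
      have hne : ‖y‖ ≠ 0 := ne_of_gt (lt_of_lt_of_le h₀ (hmem y hy).1)
      have : ContinuousAt φ y := by
        apply ContinuousAt.add
        · apply ContinuousAt.sub (hu.continuous.continuousAt)
          exact continuousAt_const.add (continuousAt_const.mul
            ((Real.continuousAt_log hne).comp continuous_norm.continuousAt))
        · exact continuousAt_const.mul ((continuous_norm.continuousAt).pow 2)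
      exact this.continuousWithinAt
    obtain ⟨p, hpK, hpmax⟩ := hKc.exists_isMaxOn ⟨x, hxK⟩ hcont
    have hp1 := (hmem p hpK).1
    have hp3 := (hmem p hpK).2
    by_cases hpb : ‖p‖ = r₁ ∨ ‖p‖ = r₃
    · have hφp : u p - (α + β * Real.log ‖p‖) + ε * ‖p‖ ^ 2 ≤ ε * r₃ ^ 2 := by
        have h1 : u p - (α + β * Real.log ‖p‖) ≤ 0 := sub_nonpos.mpr (hbound p hpb)
        have h2 : ε * ‖p‖ ^ 2 ≤ ε * r₃ ^ 2 := by
          have := mul_self_le_mul_self (norm_nonneg p) hp3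
          nlinarith
        linarith
      have hφx : φ x ≤ φ p := hpmax hxK
      have : 0 ≤ ε * ‖x‖ ^ 2 := by positivity
      rw [hφ] at hφx; simp only at hφx
      linarith
    · exfalso
      push_neg at hpb
      have hp0 : p ≠ 0 := by
        intro h; rw [h, norm_zero] at hp1; linarith
      have hploc : IsLocalMax φ p := by
        apply hpmax.isLocalMax
        rw [mem_nhds_iff]
        refine ⟨{y | r₁ < ‖y‖ ∧ ‖y‖ < r₃}, ?_, ?_, ?_⟩
        · intro y hy
          constructor
          · exact mem_closedBall_zero_iff.mpr hy.2.le
          · rw [Metric.mem_ball, dist_zero_right]; exact not_lt.mpr hy.1.le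
        · exact (isOpen_lt continuous_const continuous_norm).inter
            (isOpen_lt continuous_norm continuous_const)
        · exact ⟨lt_of_le_of_ne hp1 (Ne.symm hpb.1), lt_of_le_of_ne hp3 hpb.2⟩
      exact no_interior_max hu hsub hε hp0 hploc
  by_contra hcon
  push_neg at hcon
  set a : ℝ := u x - (α + β * Real.log ‖x‖) with ha
  have hapos : 0 < a := by rw [ha]; linarith
  have hk := hkey (a / (2 * r₃ ^ 2)) (by positivity)
  have h2 : a / (2 * r₃ ^ 2) * r₃ ^ 2 = a / 2 := by field_simp
  rw [h2] at hk
  linarith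

/-- **Classical three circles theorem in `ℝ²`.** If `u` is subharmonic on `ℝ²`
(`u` is `C²` and `Δu ≥ 0`), then for any `0 < r₁ < r₂ < r₃`,
`M_u(r₂) ≤ [M_u(r₁)(log r₃ − log r₂) + M_u(r₃)(log r₂ − log r₁)]/(log r₃ − log r₁)`. -/
theorem three_circles_euclidean_dim_two
    (u : EuclideanSpace ℝ (Fin 2) → ℝ)
    (hu : ContDiff ℝ 2 u)
    (hsub : ∀ x, 0 ≤ euclideanLaplacian u x)
    {r₁ r₂ r₃ : ℝ} (h₀ : 0 < r₁) (h₁ : r₁ < r₂) (h₂ : r₂ < r₃) :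
    maxDisk u r₂ ≤
      (maxDisk u r₁ * (Real.log r₃ - Real.log r₂) +
        maxDisk u r₃ * (Real.log r₂ - Real.log r₁)) /
        (Real.log r₃ - Real.log r₁) := by

  have hr2 : 0 < r₂ := lt_trans h₀ h₁
  have hr3 : 0 < r₃ := lt_trans hr2 h₂
  have hbdd : ∀ r : ℝ, BddAbove (u '' Metric.closedBall 0 r) := fun r =>
    ((isCompact_closedBall (0 : EuclideanSpace ℝ (Fin 2)) r).image hu.continuous).bddAbove
  have hle : ∀ (r : ℝ) (y : EuclideanSpace ℝ (Fin 2)), ‖y‖ ≤ r → u y ≤ maxDisk u r :=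
    fun r y hy => le_csSup (hbdd r) (mem_image_of_mem u (mem_closedBall_zero_iff.mpr hy))
  have hmono : maxDisk u r₁ ≤ maxDisk u r₃ := csSup_le_csSup (hbdd r₃)
    ⟨u 0, mem_image_of_mem u (Metric.mem_closedBall_self h₀.le)⟩
    (image_mono (f := u) (Metric.closedBall_subset_closedBall (by linarith)))
  have l13 : Real.log r₁ < Real.log r₃ := Real.log_lt_log h₀ (by linarith)
  have l12 : Real.log r₁ < Real.log r₂ := Real.log_lt_log h₀ h₁
  have l23 : Real.log r₂ < Real.log r₃ := Real.log_lt_log hr2 h₂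
  have hne : Real.log r₃ - Real.log r₁ ≠ 0 := by linarith
  set β : ℝ := (maxDisk u r₃ - maxDisk u r₁) / (Real.log r₃ - Real.log r₁) with hβ
  set α : ℝ := maxDisk u r₁ - β * Real.log r₁ with hα
  have hβnn : 0 ≤ β := div_nonneg (by linarith) (by linarith)
  have hbound : ∀ y : EuclideanSpace ℝ (Fin 2), ‖y‖ = r₁ ∨ ‖y‖ = r₃ →
      u y ≤ α + β * Real.log ‖y‖ := by
    rintro y (h | h)
    · rw [h]
      have h3 : α + β * Real.log r₁ = maxDisk u r₁ := by rw [hα]; ring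
      rw [h3]; exact hle r₁ y h.le
    · rw [h]
      have h3 : α + β * Real.log r₃ = maxDisk u r₃ := by
        rw [hα, hβ]; field_simp; ring
      rw [h3]; exact hle r₃ y h.le
  have hRHS : (maxDisk u r₁ * (Real.log r₃ - Real.log r₂) +
      maxDisk u r₃ * (Real.log r₂ - Real.log r₁)) / (Real.log r₃ - Real.log r₁)
      = α + β * Real.log r₂ := by
    rw [hα, hβ]; field_simp; ring
  rw [hRHS]
  apply csSup_le ⟨u 0, mem_image_of_mem u (Metric.mem_closedBall_self hr2.le)⟩
  rintro b ⟨y, hy, rfl⟩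
  have hy2 : ‖y‖ ≤ r₂ := mem_closedBall_zero_iff.mp hy
  by_cases hc : ‖y‖ ≤ r₁
  · have h1 : u y ≤ maxDisk u r₁ := hle r₁ y hc
    have h2 : maxDisk u r₁ ≤ α + β * Real.log r₂ := by
      have h3 : α + β * Real.log r₂ = maxDisk u r₁ + β * (Real.log r₂ - Real.log r₁) := by
        rw [hα]; ring
      rw [h3]
      nlinarith
    linarith
  · push_neg at hc
    have h1 : u y ≤ α + β * Real.log ‖y‖ :=
      max_principle hu hsub h₀ (by linarith) hbound hc.le (by linarith)
    have h2 : Real.log ‖y‖ ≤ Real.log r₂ := Real.log_le_log (by linarith) hy2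
    nlinarith
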